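/- For every even r ≥ 2, there exist infinitely many r-regular graphs of even order whose local antimagic chromatic number is 3 and whose chromatic number is 2. -/

import Mathlib

open Finset

namespace LocalAntimagic

variable {V : Type*} [Fintype V] [DecidableEq V]

/-- The induced vertex label: sum of labels of edges incident to `v`. -/
def inducedSum (G : SimpleGraph V) [DecidableRel G.Adj] (f : Sym2 V → ℕ) (v : V) : ℕ :=
  ∑ e ∈ G.incidenceFinset v, f e

/-- `f` is a local antimagic labeling of `G`: a bijection from the edge set onto
`{1, …, q}` (`q` the number of edges) such that adjacent vertices get distinct
induced sums. -/
def IsLocalAntimagic (G : SimpleGraph V) [DecidableRel G.Adj] (f : Sym2 V → ℕ) : Prop :=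
  Set.BijOn f G.edgeSet (Set.Icc 1 G.edgeFinset.card) ∧
  ∀ ⦃u v⦄, G.Adj u v → inducedSum G f u ≠ inducedSum G f v

/-- The number of distinct induced vertex labels under `f`. -/
def colorCount (G : SimpleGraph V) [DecidableRel G.Adj] (f : Sym2 V → ℕ) : ℕ :=
  (Finset.image (inducedSum G f) Finset.univ).card

/-- The local antimagic chromatic number of `G` (`⊤` if no local antimagic
labeling exists). -/
noncomputable def chiLA (G : SimpleGraph V) [DecidableRel G.Adj] : ℕ∞ :=
  sInf {n : ℕ∞ | ∃ f : Sym2 V → ℕ, IsLocalAntimagic G f ∧ (colorCount G f : ℕ∞) = n}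

/-- The circulant graph on `ℤ/nℤ` with connection set `S`. -/
def circulant (n : ℕ) [NeZero n] (S : Finset (ZMod n)) : SimpleGraph (ZMod n) where
  Adj u v := u ≠ v ∧ (u - v ∈ S ∨ v - u ∈ S)
  symm := ⟨fun u v h => ⟨h.1.symm, h.2.symm⟩⟩
  loopless := ⟨fun v h => h.1 rfl⟩

instance (n : ℕ) [NeZero n] (S : Finset (ZMod n)) : DecidableRel (circulant n S).Adj :=
  fun u v => inferInstanceAs (Decidable (u ≠ v ∧ (u - v ∈ S ∨ v - u ∈ S)))

/-- The cycle `C_n` as a circulant graph on `ℤ/nℤ`. -/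
def cycle (n : ℕ) [NeZero n] : SimpleGraph (ZMod n) := circulant n {1}

instance (n : ℕ) [NeZero n] : DecidableRel (cycle n).Adj :=
  inferInstanceAs (DecidableRel (circulant n {1}).Adj)

/-- The graph obtained from `G` by merging vertices according to the
identification map `q` (adjacent iff distinct and some preimages are adjacent). -/
def mergeGraph {V' W : Type*} (G : SimpleGraph V') (q : V' → W) : SimpleGraph W where
  Adj a b := a ≠ b ∧ ∃ u v, q u = a ∧ q v = b ∧ G.Adj u v
  symm := by
    constructor
    rintro a b ⟨hab, u, v, hu, hv, huv⟩
    exact ⟨hab.symm, v, u, hv, hu, huv.symm⟩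
  loopless := ⟨fun a h => h.1 rfl⟩

end LocalAntimagic


namespace LocalAntimagic

variable (n t : ℕ) [NeZero n]

/-- the jump `2j+1` as an element of `ZMod n`. -/
def cc (j : ℕ) : ZMod n := ((2*j+1 : ℕ) : ZMod n)

/-- the connection set `{1, 3, …, 2t+1}`. -/
def jset : Finset (ZMod n) := (Finset.range (t+1)).image (cc n)

/-- our circulant graph. -/
def Gg : SimpleGraph (ZMod n) := circulant n (jset n t)

instance : DecidableRel (Gg n t).Adj :=
  fun u v => inferInstanceAs (Decidable (u ≠ v ∧ (u - v ∈ jset n t ∨ v - u ∈ jset n t)))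

/-- the base edge-label sequence along a cycle. -/
def aval (k : ℕ) : ℕ := if k % 2 = 0 then k/2 + 1 else n - k/2

/-- the position of vertex `u` along the jump-`j` cycle. -/
def Kk (u : ZMod n) (j : ℕ) : ℕ := (u * (cc n j)⁻¹).val

def Ff (u v : ZMod n) : ℕ := n * (((v-u).val - 1)/2) + aval n ((u * (v-u)⁻¹).val)

def cnd (u v : ZMod n) : Prop := (v-u).val % 2 = 1 ∧ (v-u).val ≤ 2*t+1

instance : DecidablePred fun p : ZMod n × ZMod n => cnd n t p.1 p.2 := fun p =>
  inferInstanceAs (Decidable (_ ∧ _))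

instance (u v : ZMod n) : Decidable (cnd n t u v) :=
  inferInstanceAs (Decidable (_ ∧ _))

def gfun (u v : ZMod n) : ℕ :=
  if cnd n t u v then
    (if cnd n t v u ∧ v.val < u.val then Ff n v u else Ff n u v)
  else if cnd n t v u then Ff n v u else 0

lemma gfun_symm (u v : ZMod n) : gfun n t u v = gfun n t v u := by
  unfold gfun
  by_cases h1 : cnd n t u v <;> by_cases h2 : cnd n t v u <;>
    simp only [h1, h2, if_pos, if_neg, if_true, if_false, true_and, false_and, and_true,
      and_false]
  · rcases lt_trichotomy u.val v.val with h | h | h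
    · rw [if_neg (by omega), if_pos (by omega)]
    · have : u = v := ZMod.val_injective n h
      subst this; simp
    · rw [if_pos (by omega), if_neg (by omega)]

/-- The labeling. -/
def flab : Sym2 (ZMod n) → ℕ := Sym2.lift ⟨gfun n t, gfun_symm n t⟩

end LocalAntimagic

namespace LocalAntimagic

variable {n t : ℕ} [NeZero n]

lemma cc_val (hub : 4*t+4 ≤ n) {j : ℕ} (hj : j ≤ t) : (cc n j).val = 2*j+1 :=
  ZMod.val_natCast_of_lt (by omega)

lemma cc_ne_zero (hub : 4*t+4 ≤ n) {j : ℕ} (hj : j ≤ t) : cc n j ≠ 0 := by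
  intro h
  have := cc_val hub hj
  rw [h, ZMod.val_zero] at this
  omega

lemma cc_ne_neg (hub : 4*t+4 ≤ n) {j j' : ℕ} (hj : j ≤ t) (hj' : j' ≤ t) :
    cc n j ≠ - cc n j' := by
  intro h
  have h0 : cc n j + cc n j' = 0 := by rw [h]; ring
  have hval : ((2*j+1 + (2*j'+1) : ℕ) : ZMod n) = 0 := by
    push_cast
    push_cast [cc] at h0
    linear_combination h0
  have := (ZMod.natCast_eq_zero_iff _ _).mp hval
  have := Nat.le_of_dvd (by omega) this
  omega

lemma cc_inj (hub : 4*t+4 ≤ n) {j j' : ℕ} (hj : j ≤ t) (hj' : j' ≤ t)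
    (h : cc n j = cc n j') : j = j' := by
  have h1 := cc_val (t := t) hub hj
  have h2 := cc_val (t := t) hub hj'
  rw [h] at h1
  omega

lemma mem_jset (hub : 4*t+4 ≤ n) {x : ZMod n} :
    x ∈ jset n t ↔ ∃ j ≤ t, x = cc n j := by
  simp only [jset, mem_image, mem_range]
  constructor
  · rintro ⟨j, hj, rfl⟩; exact ⟨j, by omega, rfl⟩
  · rintro ⟨j, hj, rfl⟩; exact ⟨j, by omega, rfl⟩

lemma adj_iff (hub : 4*t+4 ≤ n) {u v : ZMod n} :
    (Gg n t).Adj u v ↔ ∃ j ≤ t, v = u + cc n j ∨ v = u - cc n j := by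
  constructor
  · rintro ⟨hne, h | h⟩
    · rw [mem_jset hub] at h
      obtain ⟨j, hj, hx⟩ := h
      exact ⟨j, hj, Or.inr (by rw [← hx]; ring)⟩
    · rw [mem_jset hub] at h
      obtain ⟨j, hj, hx⟩ := h
      exact ⟨j, hj, Or.inl (by rw [← hx]; ring)⟩
  · rintro ⟨j, hj, rfl | rfl⟩
    · refine ⟨?_, Or.inr (by ring_nf; exact mem_image_of_mem _ (mem_range.mpr (by omega)))⟩
      intro h
      exact cc_ne_zero hub hj (by linear_combination -h)
    · refine ⟨?_, Or.inl (by ring_nf; exact mem_image_of_mem _ (mem_range.mpr (by omega)))⟩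
      intro h
      exact cc_ne_zero hub hj (by linear_combination h)

lemma neighborFinset_eq (hub : 4*t+4 ≤ n) (u : ZMod n) :
    (Gg n t).neighborFinset u =
      ((Finset.range (t+1)).image (fun j => u + cc n j)) ∪
      ((Finset.range (t+1)).image (fun j => u - cc n j)) := by
  ext v
  rw [SimpleGraph.mem_neighborFinset, adj_iff hub]
  simp only [mem_union, mem_image, mem_range]
  constructor
  · rintro ⟨j, hj, h | h⟩
    · exact Or.inl ⟨j, by omega, h.symm⟩
    · exact Or.inr ⟨j, by omega, h.symm⟩
  · rintro (⟨j, hj, h⟩ | ⟨j, hj, h⟩)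
    · exact ⟨j, by omega, Or.inl h.symm⟩
    · exact ⟨j, by omega, Or.inr h.symm⟩

lemma regular (hub : 4*t+4 ≤ n) : (Gg n t).IsRegularOfDegree (2*(t+1)) := by
  intro u
  rw [SimpleGraph.degree, neighborFinset_eq hub u]
  have hinj1 : ∀ j ∈ Finset.range (t+1), ∀ j' ∈ Finset.range (t+1),
      u + cc n j = u + cc n j' → j = j' := by
    intro j hj j' hj' h
    exact cc_inj hub (by simp at hj; omega) (by simp at hj'; omega) (by linear_combination h)
  have hinj2 : ∀ j ∈ Finset.range (t+1), ∀ j' ∈ Finset.range (t+1),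
      u - cc n j = u - cc n j' → j = j' := by
    intro j hj j' hj' h
    exact cc_inj hub (by simp at hj; omega) (by simp at hj'; omega) (by linear_combination -h)
  rw [Finset.card_union_of_disjoint, Finset.card_image_of_injOn hinj1,
    Finset.card_image_of_injOn hinj2, Finset.card_range]
  · ring
  · rw [Finset.disjoint_left]
    rintro x hx1 hx2
    simp only [mem_image, mem_range] at hx1 hx2
    obtain ⟨j, hj, rfl⟩ := hx1
    obtain ⟨j', hj', h⟩ := hx2
    exact cc_ne_neg hub (by omega : j ≤ t) (by omega : j' ≤ t)
      (by linear_combination -h)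

lemma parity_flip (hn2 : 2 ∣ n) (hub : 4*t+4 ≤ n) {u v : ZMod n}
    (h : (Gg n t).Adj u v) : v.val % 2 ≠ u.val % 2 := by
  rw [adj_iff hub] at h
  obtain ⟨j, hj, rfl | rfl⟩ := h
  · have : (u + cc n j).val = (u.val + (cc n j).val) % n := by
      rw [ZMod.val_add]
    rw [this, Nat.mod_mod_of_dvd _ hn2, cc_val hub hj]
    omega
  · have h1 : ((u - cc n j) + cc n j).val = ((u - cc n j).val + (cc n j).val) % n := by
      rw [ZMod.val_add]
    rw [sub_add_cancel] at h1
    have h2 : u.val % 2 = ((u - cc n j).val + (cc n j).val) % 2 := by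
      rw [h1, Nat.mod_mod_of_dvd _ hn2]
    rw [cc_val hub hj] at h2
    omega

lemma chrom (hn2 : 2 ∣ n) (hub : 4*t+4 ≤ n) : (Gg n t).chromaticNumber = 2 := by
  have hcol : (Gg n t).Colorable 2 := by
    refine ⟨SimpleGraph.Coloring.mk (fun v => ⟨v.val % 2, by omega⟩) ?_⟩
    intro u v huv h
    exact parity_flip hn2 hub huv (by simpa using (congrArg Fin.val h).symm)
  refine le_antisymm (hcol.chromaticNumber_le) ?_
  by_contra hlt
  push_neg at hlt
  have h1 : (Gg n t).chromaticNumber ≤ 1 := Order.le_of_lt_add_one (by exact_mod_cast hlt)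
  have := SimpleGraph.chromaticNumber_le_iff_colorable.mp (by exact_mod_cast h1)
  obtain ⟨c⟩ := this
  have hadj : (Gg n t).Adj 0 (cc n 0) := by
    rw [adj_iff hub]
    exact ⟨0, Nat.zero_le _, Or.inl (by ring)⟩
  exact c.valid hadj (Subsingleton.elim _ _)

end LocalAntimagic

namespace LocalAntimagic

variable {n t : ℕ} [NeZero n]

lemma flab_mk (u v : ZMod n) : flab n t s(u, v) = gfun n t u v := rfl

lemma not_cnd_rev (hub : 4*t+4 ≤ n) {u v : ZMod n} (h : cnd n t u v) (hne : u ≠ v) :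
    ¬ cnd n t v u := by
  rintro ⟨h1, h2⟩
  obtain ⟨h3, h4⟩ := h
  have hadd : ((v - u) + (u - v)) = (0 : ZMod n) := by ring
  have hval : ((v-u) + (u-v)).val = ((v-u).val + (u-v).val) % n := ZMod.val_add _ _
  rw [hadd, ZMod.val_zero] at hval
  have hvu : (v - u).val ≠ 0 := by
    intro h0
    exact hne (by linear_combination - ((ZMod.val_eq_zero _).mp h0))
  have := Nat.mod_eq_of_lt (show (v-u).val + (u-v).val < n by omega)
  omega

lemma flab_eval (hub : 4*t+4 ≤ n) {j : ℕ} (hj : j ≤ t) (u : ZMod n) :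
    flab n t s(u, u + cc n j) = n*j + aval n (Kk n u j) := by
  have hd : (u + cc n j) - u = cc n j := by ring
  have hval : ((u + cc n j) - u).val = 2*j+1 := by rw [hd, cc_val hub hj]
  have hc : cnd n t u (u + cc n j) := ⟨by omega, by omega⟩
  have hne : u ≠ u + cc n j := by
    intro h
    exact cc_ne_zero hub hj (by linear_combination -h)
  have hnc := not_cnd_rev hub hc hne
  rw [flab_mk, gfun, if_pos hc, if_neg (by tauto), Ff, hval, hd]
  have h2 : (2*j+1-1)/2 = j := by omega
  rw [h2]
  rfl


lemma Kk_lt (u : ZMod n) (j : ℕ) : Kk n u j < n := ZMod.val_lt _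

lemma Kk_cast (u : ZMod n) (j : ℕ) : ((Kk n u j : ℕ) : ZMod n) = u * (cc n j)⁻¹ :=
  ZMod.natCast_zmod_val _

lemma Kk_mul (hu : IsUnit (cc n j)) (u : ZMod n) :
    ((Kk n u j : ℕ) : ZMod n) * cc n j = u := by
  rw [Kk_cast, mul_assoc, ZMod.inv_mul_of_unit _ hu, mul_one]

lemma Kk_inj (hu : IsUnit (cc n j)) {u u' : ZMod n} (h : Kk n u j = Kk n u' j) :
    u = u' := by
  have := congrArg (fun k : ℕ => ((k : ZMod n) * cc n j)) h
  simpa only [Kk_mul hu] using this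

lemma Kk_zero_iff (hu : IsUnit (cc n j)) {u : ZMod n} : Kk n u j = 0 ↔ u = 0 := by
  constructor
  · intro h
    have := Kk_mul hu u
    rw [h] at this
    simpa using this.symm
  · rintro rfl
    simp [Kk]

lemma Kk_parity (hn2 : 2 ∣ n) (hub : 4*t+4 ≤ n) {j : ℕ} (hj : j ≤ t)
    (hu : IsUnit (cc n j)) (u : ZMod n) : Kk n u j % 2 = u.val % 2 := by
  have h1 : ((Kk n u j * (2*j+1) : ℕ) : ZMod n) = u := by
    rw [Nat.cast_mul]
    exact Kk_mul hu u
  have h2 : u.val = (Kk n u j * (2*j+1)) % n := by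
    conv_lhs => rw [← h1]
    rw [ZMod.val_natCast]
  have h3 : u.val % 2 = (Kk n u j * (2*j+1)) % 2 := by
    rw [h2, Nat.mod_mod_of_dvd _ hn2]
  have h4 : (Kk n u j * (2*j+1)) % 2 = Kk n u j % 2 := by
    conv_lhs => rw [Nat.mul_mod]
    have h5 : (2*j+1) % 2 = 1 := by omega
    rw [h5, mul_one, Nat.mod_mod_of_dvd _ (dvd_refl 2)]
  omega

lemma Kk_pred (hub : 4*t+4 ≤ n) {j : ℕ} (hu : IsUnit (cc n j)) (u : ZMod n) :
    Kk n (u - cc n j) j = if Kk n u j = 0 then n - 1 else Kk n u j - 1 := by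
  have key : (u - cc n j) * (cc n j)⁻¹ = ((Kk n u j : ℕ) : ZMod n) - 1 := by
    rw [Kk_cast, sub_mul, ZMod.mul_inv_of_unit _ hu]
  have hn1 : 1 ≤ n := Nat.one_le_iff_ne_zero.mpr (NeZero.ne n)
  by_cases h0 : Kk n u j = 0
  · rw [if_pos h0]
    rw [h0] at key
    have : (u - cc n j) * (cc n j)⁻¹ = ((n - 1 : ℕ) : ZMod n) := by
      rw [key, Nat.cast_sub hn1, ZMod.natCast_self, Nat.cast_one]
      ring
    rw [Kk, this, ZMod.val_natCast_of_lt (by omega)]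
  · rw [if_neg h0]
    have : (u - cc n j) * (cc n j)⁻¹ = ((Kk n u j - 1 : ℕ) : ZMod n) := by
      rw [key, Nat.cast_sub (by omega), Nat.cast_one]
    rw [Kk, this, ZMod.val_natCast_of_lt (by have := Kk_lt (n := n) u j; omega)]

lemma aval_pos (hn4 : 4 ≤ n) {k : ℕ} (hk : k < n) : 1 ≤ aval n k := by
  unfold aval; split <;> omega

lemma aval_le {k : ℕ} (hk : k < n) : aval n k ≤ n := by
  unfold aval; split <;> omega

lemma aval_inj (hn2 : 2 ∣ n) {k k' : ℕ} (hk : k < n) (hk' : k' < n)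
    (h : aval n k = aval n k') : k = k' := by
  unfold aval at h; split at h <;> split at h <;> omega

lemma aval_surj (hn2 : 2 ∣ n) {y : ℕ} (h1 : 1 ≤ y) (h2 : y ≤ n) :
    ∃ k, k < n ∧ aval n k = y := by
  by_cases hy : y ≤ n/2
  · exact ⟨2*(y-1), by omega, by unfold aval; split <;> omega⟩
  · exact ⟨2*(n-y)+1, by omega, by unfold aval; split <;> omega⟩

lemma wsum_eval (hn2 : 2 ∣ n) (hn4 : 4 ≤ n) {K : ℕ} (hK : K < n) :
    aval n K + aval n (if K = 0 then n - 1 else K - 1) =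
      if K = 0 then n/2 + 2 else if K % 2 = 1 then n + 1 else n + 2 := by
  unfold aval
  split_ifs <;> omega

end LocalAntimagic

namespace LocalAntimagic

lemma incidenceFinset_eq_image {V : Type*} [Fintype V] [DecidableEq V]
    (G : SimpleGraph V) [DecidableRel G.Adj] (v : V) :
    G.incidenceFinset v = (G.neighborFinset v).image (fun w => s(v, w)) := by
  ext e
  induction e with
  | _ a b =>
    simp only [SimpleGraph.mem_incidenceFinset, SimpleGraph.mk'_mem_incidenceSet_iff,
      Finset.mem_image, SimpleGraph.mem_neighborFinset]
    constructor
    · rintro ⟨hadj, rfl | rfl⟩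
      · exact ⟨b, hadj, rfl⟩
      · exact ⟨a, hadj.symm, Sym2.eq_swap⟩
    · rintro ⟨w, hw, h⟩
      rw [Sym2.eq_iff] at h
      rcases h with ⟨rfl, rfl⟩ | ⟨rfl, rfl⟩
      · exact ⟨hw, Or.inl rfl⟩
      · exact ⟨hw.symm, Or.inr rfl⟩

variable {n t : ℕ} [NeZero n]

/-- The three possible induced sums. -/
def Wv (n : ℕ) [NeZero n] (v : ZMod n) : ℕ :=
  if v = 0 then n/2 + 2 else if v.val % 2 = 1 then n + 1 else n + 2

lemma inducedSum_eq (hn2 : 2 ∣ n) (hub : 4*t+4 ≤ n)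
    (hu : ∀ j ≤ t, IsUnit (cc n j)) (v : ZMod n) :
    inducedSum (Gg n t) (flab n t) v = n*(t*(t+1)) + (t+1) * Wv n v := by
  have h1 : inducedSum (Gg n t) (flab n t) v
      = ∑ w ∈ (Gg n t).neighborFinset v, flab n t s(v, w) := by
    rw [inducedSum, incidenceFinset_eq_image]
    rw [Finset.sum_image]
    intro w hw w' hw' h
    exact Sym2.congr_right.mp h
  have hinj1 : ∀ j ∈ Finset.range (t+1), ∀ j' ∈ Finset.range (t+1),
      v + cc n j = v + cc n j' → j = j' := by
    intro j hj j' hj' h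
    exact cc_inj hub (by simp at hj; omega) (by simp at hj'; omega) (by linear_combination h)
  have hinj2 : ∀ j ∈ Finset.range (t+1), ∀ j' ∈ Finset.range (t+1),
      v - cc n j = v - cc n j' → j = j' := by
    intro j hj j' hj' h
    exact cc_inj hub (by simp at hj; omega) (by simp at hj'; omega) (by linear_combination -h)
  have hdisj : Disjoint ((Finset.range (t+1)).image (fun j => v + cc n j))
      ((Finset.range (t+1)).image (fun j => v - cc n j)) := by
    rw [Finset.disjoint_left]
    rintro x hx1 hx2
    simp only [Finset.mem_image, Finset.mem_range] at hx1 hx2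
    obtain ⟨j, hj, rfl⟩ := hx1
    obtain ⟨j', hj', h⟩ := hx2
    exact cc_ne_neg hub (by omega : j ≤ t) (by omega : j' ≤ t) (by linear_combination -h)
  have h2 : ∑ w ∈ (Gg n t).neighborFinset v, flab n t s(v, w)
      = ∑ j ∈ Finset.range (t+1), flab n t s(v, v + cc n j)
        + ∑ j ∈ Finset.range (t+1), flab n t s(v, v - cc n j) := by
    rw [neighborFinset_eq hub v, Finset.sum_union hdisj,
      Finset.sum_image hinj1, Finset.sum_image hinj2]
  have h3 : ∀ j ∈ Finset.range (t+1),
      flab n t s(v, v + cc n j) = n*j + aval n (Kk n v j) := by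
    intro j hj
    exact flab_eval hub (by simp at hj; omega) v
  have h4 : ∀ j ∈ Finset.range (t+1),
      flab n t s(v, v - cc n j) = n*j + aval n (Kk n (v - cc n j) j) := by
    intro j hj
    have he : s(v, v - cc n j) = s(v - cc n j, (v - cc n j) + cc n j) := by
      rw [sub_add_cancel, Sym2.eq_swap]
    rw [he, flab_eval hub (by simp at hj; omega)]
  have hW : ∀ j ∈ Finset.range (t+1),
      (n*j + aval n (Kk n v j)) + (n*j + aval n (Kk n (v - cc n j) j))
        = 2*n*j + Wv n v := by
    intro j hj
    have hjt : j ≤ t := by simp at hj; omega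
    have hKlt := Kk_lt (n := n) v j
    have hz : (Kk n v j = 0) = (v = 0) := by
      rw [eq_iff_iff]; exact Kk_zero_iff (hu j hjt)
    have hpar := Kk_parity hn2 hub hjt (hu j hjt) v
    have key : aval n (Kk n v j)
        + aval n (if Kk n v j = 0 then n - 1 else Kk n v j - 1) = Wv n v := by
      rw [wsum_eval hn2 (by omega) hKlt, Wv]
      simp only [hz, hpar]
    rw [Kk_pred hub (hu j hjt) v, ← key]
    ring
  calc inducedSum (Gg n t) (flab n t) v
      = ∑ j ∈ Finset.range (t+1), flab n t s(v, v + cc n j)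
        + ∑ j ∈ Finset.range (t+1), flab n t s(v, v - cc n j) := by rw [h1, h2]
    _ = ∑ j ∈ Finset.range (t+1), (n*j + aval n (Kk n v j))
        + ∑ j ∈ Finset.range (t+1), (n*j + aval n (Kk n (v - cc n j) j)) := by
        rw [Finset.sum_congr rfl h3, Finset.sum_congr rfl h4]
    _ = ∑ j ∈ Finset.range (t+1),
          ((n*j + aval n (Kk n v j)) + (n*j + aval n (Kk n (v - cc n j) j))) := by
        rw [← Finset.sum_add_distrib]
    _ = ∑ j ∈ Finset.range (t+1), (2*n*j + Wv n v) := Finset.sum_congr rfl hW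
    _ = 2*n*(∑ j ∈ Finset.range (t+1), j) + (t+1) * Wv n v := by
        rw [Finset.sum_add_distrib, ← Finset.mul_sum, Finset.sum_const, Finset.card_range,
          smul_eq_mul]
    _ = n*(t*(t+1)) + (t+1) * Wv n v := by
        have := Finset.sum_range_id_mul_two (t+1)
        have h5 : 2*n*(∑ j ∈ Finset.range (t+1), j) = n * ((∑ j ∈ Finset.range (t+1), j) * 2) := by
          ring
        rw [h5, this]
        simp only [Nat.add_sub_cancel]
        ring

end LocalAntimagic

namespace LocalAntimagic

variable {n t : ℕ} [NeZero n]

lemma edge_card (hub : 4*t+4 ≤ n) : (Gg n t).edgeFinset.card = n*(t+1) := by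
  have h := (Gg n t).sum_degrees_eq_twice_card_edges
  have h2 : ∑ v : ZMod n, (Gg n t).degree v = n * (2*(t+1)) := by
    rw [Finset.sum_congr rfl (fun v _ => regular hub v), Finset.sum_const, Finset.card_univ,
      ZMod.card, smul_eq_mul]
  have h3 : n*(2*(t+1)) = 2*(n*(t+1)) := by ring
  omega

lemma edge_rep (hub : 4*t+4 ≤ n) {e : Sym2 (ZMod n)} (he : e ∈ (Gg n t).edgeSet) :
    ∃ j ≤ t, ∃ u : ZMod n, e = s(u, u + cc n j) := by
  induction e with
  | _ a b =>
    rw [SimpleGraph.mem_edgeSet, adj_iff hub] at he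
    obtain ⟨j, hj, rfl | rfl⟩ := he
    · exact ⟨j, hj, a, rfl⟩
    · exact ⟨j, hj, a - cc n j, by rw [sub_add_cancel, Sym2.eq_swap]⟩

lemma block_eq {m j1 j2 a1 a2 : ℕ} (h1 : 1 ≤ a1) (h2 : a1 ≤ m) (h3 : 1 ≤ a2) (h4 : a2 ≤ m)
    (h : m*j1 + a1 = m*j2 + a2) : j1 = j2 ∧ a1 = a2 := by
  rcases lt_trichotomy j1 j2 with hlt | heq | hgt
  · exfalso
    have ha : m*(j1+1) ≤ m*j2 := Nat.mul_le_mul_left m hlt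
    have hb : m*(j1+1) = m*j1 + m := by ring
    omega
  · subst heq
    exact ⟨rfl, by omega⟩
  · exfalso
    have ha : m*(j2+1) ≤ m*j1 := Nat.mul_le_mul_left m hgt
    have hb : m*(j2+1) = m*j2 + m := by ring
    omega

lemma flab_bijOn (hn2 : 2 ∣ n) (hub : 4*t+4 ≤ n) (hu : ∀ j ≤ t, IsUnit (cc n j)) :
    Set.BijOn (flab n t) (Gg n t).edgeSet (Set.Icc 1 ((Gg n t).edgeFinset.card)) := by
  have hn4 : 4 ≤ n := by omega
  rw [edge_card hub]
  refine ⟨?_, ?_, ?_⟩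
  · -- MapsTo
    intro e he
    obtain ⟨j, hj, u, rfl⟩ := edge_rep hub he
    rw [flab_eval hub hj]
    have hK := Kk_lt (n := n) u j
    have ha1 := aval_pos hn4 hK
    have ha2 := aval_le (n := n) hK
    constructor
    · omega
    · have : n*j + aval n (Kk n u j) ≤ n*j + n := by omega
      have h2 : n*(j+1) ≤ n*(t+1) := Nat.mul_le_mul_left n (by omega)
      calc n*j + aval n (Kk n u j) ≤ n*j + n := by omega
        _ = n*(j+1) := by ring
        _ ≤ n*(t+1) := h2
  · -- InjOn
    intro e1 he1 e2 he2 hf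
    obtain ⟨j1, hj1, u1, rfl⟩ := edge_rep hub he1
    obtain ⟨j2, hj2, u2, rfl⟩ := edge_rep hub he2
    rw [flab_eval hub hj1, flab_eval hub hj2] at hf
    have hK1 := Kk_lt (n := n) u1 j1
    have hK2 := Kk_lt (n := n) u2 j2
    obtain ⟨hjeq, haeq⟩ := block_eq (aval_pos hn4 hK1) (aval_le hK1)
      (aval_pos hn4 hK2) (aval_le hK2) hf
    subst hjeq
    have hKeq : Kk n u1 j1 = Kk n u2 j1 := aval_inj hn2 hK1 hK2 haeq
    rw [Kk_inj (hu j1 hj1) hKeq]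
  · -- SurjOn
    intro x hx
    obtain ⟨hx1, hx2⟩ := hx
    have hnpos : 0 < n := by omega
    have hmod := Nat.div_add_mod (x-1) n
    have hmlt : (x-1) % n < n := Nat.mod_lt _ hnpos
    have hjt : (x-1)/n ≤ t := by
      have hcomm : (t+1)*n = n*(t+1) := by ring
      have : (x-1)/n < t+1 := (Nat.div_lt_iff_lt_mul hnpos).mpr (by omega)
      omega
    set j := (x-1)/n with hjdef
    set y := (x-1) % n + 1 with hydef
    obtain ⟨K, hKlt, hKa⟩ := aval_surj (n := n) (y := y) hn2 (by omega) (by omega)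
    refine ⟨s((K : ZMod n) * cc n j, (K : ZMod n) * cc n j + cc n j), ?_, ?_⟩
    · rw [SimpleGraph.mem_edgeSet, adj_iff hub]
      exact ⟨j, hjt, Or.inl rfl⟩
    · rw [flab_eval hub hjt]
      have hKk : Kk n ((K : ZMod n) * cc n j) j = K := by
        rw [Kk, mul_assoc, ZMod.mul_inv_of_unit _ (hu j hjt), mul_one,
          ZMod.val_natCast_of_lt hKlt]
      rw [hKk, hKa]
      omega

lemma sums_ne (hn2 : 2 ∣ n) (hub : 4*t+4 ≤ n) (hu : ∀ j ≤ t, IsUnit (cc n j))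
    {u v : ZMod n} (hadj : (Gg n t).Adj u v) :
    inducedSum (Gg n t) (flab n t) u ≠ inducedSum (Gg n t) (flab n t) v := by
  have hpar := parity_flip hn2 hub hadj
  rw [inducedSum_eq hn2 hub hu, inducedSum_eq hn2 hub hu]
  have hWne : Wv n u ≠ Wv n v := by
    have hu0 : u = 0 → u.val = 0 := fun h => by rw [h, ZMod.val_zero]
    have hv0 : v = 0 → v.val = 0 := fun h => by rw [h, ZMod.val_zero]
    unfold Wv
    by_cases h1 : u = 0 <;> by_cases h2 : v = 0 <;>
      simp only [h1, h2, if_true, if_false, ite_true, ite_false] <;> [skip; skip; skip; skip]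
    · exact absurd (by rw [hu0 h1, hv0 h2]) hpar.symm
    · have := hu0 h1
      split_ifs <;> omega
    · have := hv0 h2
      split_ifs <;> omega
    · split_ifs <;> omega
  intro h
  apply hWne
  have := Nat.add_left_cancel h
  exact Nat.eq_of_mul_eq_mul_left (by omega) this

end LocalAntimagic

namespace LocalAntimagic

variable {n t : ℕ} [NeZero n]

lemma colorCount_flab (hn2 : 2 ∣ n) (hub : 4*t+4 ≤ n) (hu : ∀ j ≤ t, IsUnit (cc n j)) :
    colorCount (Gg n t) (flab n t) = 3 := by
  have hn4 : 4 ≤ n := by omega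
  set X0 := n*(t*(t+1)) + (t+1) * (n/2+2) with hX0
  set X1 := n*(t*(t+1)) + (t+1) * (n+1) with hX1
  set X2 := n*(t*(t+1)) + (t+1) * (n+2) with hX2
  have himg : Finset.image (inducedSum (Gg n t) (flab n t)) Finset.univ = {X0, X1, X2} := by
    apply Finset.Subset.antisymm
    · intro x hx
      simp only [Finset.mem_image, Finset.mem_univ, true_and] at hx
      obtain ⟨v, rfl⟩ := hx
      rw [inducedSum_eq hn2 hub hu, Wv]
      simp only [Finset.mem_insert, Finset.mem_singleton]
      split_ifs
      · exact Or.inl rfl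
      · exact Or.inr (Or.inl rfl)
      · exact Or.inr (Or.inr rfl)
    · intro x hx
      simp only [Finset.mem_insert, Finset.mem_singleton] at hx
      simp only [Finset.mem_image, Finset.mem_univ, true_and]
      rcases hx with rfl | rfl | rfl
      · exact ⟨0, by rw [inducedSum_eq hn2 hub hu, Wv, if_pos rfl]⟩
      · refine ⟨cc n 0, ?_⟩
        rw [inducedSum_eq hn2 hub hu, Wv, if_neg (cc_ne_zero hub (Nat.zero_le t)),
          if_pos (by rw [cc_val hub (Nat.zero_le t)])]
      · refine ⟨((2:ℕ) : ZMod n), ?_⟩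
        have hval2 : (((2:ℕ) : ZMod n)).val = 2 := ZMod.val_natCast_of_lt (by omega)
        have hne : ((2:ℕ) : ZMod n) ≠ 0 := by
          intro h
          rw [h, ZMod.val_zero] at hval2
          omega
        rw [inducedSum_eq hn2 hub hu, Wv, if_neg hne, if_neg (by rw [hval2]; omega)]
  rw [colorCount, himg]
  have hlt : (t+1) * (n/2+2) < (t+1) * (n+1) ∧ (t+1) * (n+1) < (t+1) * (n+2) := by
    constructor <;> exact (Nat.mul_lt_mul_left (by omega)).mpr (by omega)
  rw [Finset.card_insert_of_notMem, Finset.card_insert_of_notMem, Finset.card_singleton]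
  · simp only [Finset.mem_singleton]
    omega
  · simp only [Finset.mem_insert, Finset.mem_singleton]
    push_neg
    omega

/-- summing any edge function over a transversal class -/
lemma sum_class {V : Type*} [Fintype V] [DecidableEq V]
    (G : SimpleGraph V) [DecidableRel G.Adj] (g : Sym2 V → ℕ) (C : Finset V)
    (hone : ∀ e ∈ G.edgeFinset, (C.filter (fun v => v ∈ e)).card = 1) :
    ∑ v ∈ C, ∑ e ∈ G.incidenceFinset v, g e = ∑ e ∈ G.edgeFinset, g e := by
  have h1 : ∀ v : V, ∑ e ∈ G.incidenceFinset v, g e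
      = ∑ e ∈ G.edgeFinset, if v ∈ e then g e else 0 := by
    intro v
    rw [SimpleGraph.incidenceFinset_eq_filter, Finset.sum_filter]
  rw [Finset.sum_congr rfl (fun v _ => h1 v), Finset.sum_comm]
  apply Finset.sum_congr rfl
  intro e he
  rw [← Finset.sum_filter, Finset.sum_const, hone e he, one_smul]

/-- In a regular graph with at least one edge, no labeling with distinct sums on
adjacent vertices can induce exactly two distinct sums. -/
lemma colorCount_ne_two {V : Type*} [Fintype V] [DecidableEq V]
    (G : SimpleGraph V) [DecidableRel G.Adj] {r : ℕ} (hr : 0 < r)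
    (hreg : G.IsRegularOfDegree r) (hE : G.edgeFinset.Nonempty) (f : Sym2 V → ℕ)
    (hf : ∀ ⦃u v⦄, G.Adj u v → inducedSum G f u ≠ inducedSum G f v) :
    colorCount G f ≠ 2 := by
  intro h2
  obtain ⟨x, y, hxy, hset⟩ := Finset.card_eq_two.mp h2
  have hvals : ∀ v : V, inducedSum G f v = x ∨ inducedSum G f v = y := by
    intro v
    have hv : inducedSum G f v ∈ Finset.image (inducedSum G f) Finset.univ :=
      Finset.mem_image_of_mem _ (Finset.mem_univ v)
    rw [hset] at hv
    simpa using hv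
  -- each edge has exactly one endpoint in each class
  have hone : ∀ (z w : ℕ), z ≠ w → (∀ v : V, inducedSum G f v = z ∨ inducedSum G f v = w) →
      ∀ e ∈ G.edgeFinset,
        ((Finset.univ.filter (fun v => inducedSum G f v = z)).filter
          (fun v => v ∈ e)).card = 1 := by
    intro z w hzw hv e he
    induction e with
    | _ a b =>
      have hadj : G.Adj a b := by rwa [SimpleGraph.mem_edgeFinset, SimpleGraph.mem_edgeSet] at he
      have hne : a ≠ b := hadj.ne
      have hsum : inducedSum G f a ≠ inducedSum G f b := hf hadj
      rcases hv a with ha | ha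
      · have hb : inducedSum G f b ≠ z := fun h => hsum (by rw [ha, h])
        have : (Finset.univ.filter (fun v => inducedSum G f v = z)).filter
            (fun v => v ∈ s(a,b)) = {a} := by
          ext v
          simp only [Finset.mem_filter, Finset.mem_univ, true_and, Sym2.mem_iff,
            Finset.mem_singleton]
          constructor
          · rintro ⟨hvz, rfl | rfl⟩
            · rfl
            · exact absurd hvz hb
          · rintro rfl
            exact ⟨ha, Or.inl rfl⟩
        rw [this, Finset.card_singleton]
      · have ha' : inducedSum G f a ≠ z := by rw [ha]; exact fun h => hzw h.symm
        have hb : inducedSum G f b = z := by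
          rcases hv b with h | h
          · exact h
          · exact absurd (by rw [ha, h]) hsum
        have : (Finset.univ.filter (fun v => inducedSum G f v = z)).filter
            (fun v => v ∈ s(a,b)) = {b} := by
          ext v
          simp only [Finset.mem_filter, Finset.mem_univ, true_and, Sym2.mem_iff,
            Finset.mem_singleton]
          constructor
          · rintro ⟨hvz, rfl | rfl⟩
            · exact absurd hvz ha'
            · rfl
          · rintro rfl
            exact ⟨hb, Or.inr rfl⟩
        rw [this, Finset.card_singleton]
  set A := Finset.univ.filter (fun v => inducedSum G f v = x) with hA
  set B := Finset.univ.filter (fun v => inducedSum G f v = y) with hB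
  have honeA := hone x y hxy hvals
  have honeB := hone y x hxy.symm (fun v => (hvals v).symm)
  have hsumA : ∑ v ∈ A, inducedSum G f v = ∑ e ∈ G.edgeFinset, f e :=
    sum_class G f A honeA
  have hsumB : ∑ v ∈ B, inducedSum G f v = ∑ e ∈ G.edgeFinset, f e :=
    sum_class G f B honeB
  have hcountA : r * A.card = G.edgeFinset.card := by
    have := sum_class G (fun _ => 1) A honeA
    simp only [Finset.sum_const, smul_eq_mul, mul_one] at this
    have hdeg : ∀ v ∈ A, (G.incidenceFinset v).card = r := by
      intro v _
      rw [SimpleGraph.card_incidenceFinset_eq_degree]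
      exact hreg v
    rw [Finset.sum_congr rfl hdeg, Finset.sum_const, smul_eq_mul] at this
    rw [← this]
    ring
  have hcountB : r * B.card = G.edgeFinset.card := by
    have := sum_class G (fun _ => 1) B honeB
    simp only [Finset.sum_const, smul_eq_mul, mul_one] at this
    have hdeg : ∀ v ∈ B, (G.incidenceFinset v).card = r := by
      intro v _
      rw [SimpleGraph.card_incidenceFinset_eq_degree]
      exact hreg v
    rw [Finset.sum_congr rfl hdeg, Finset.sum_const, smul_eq_mul] at this
    rw [← this]
    ring
  have hAB : A.card = B.card := Nat.eq_of_mul_eq_mul_left hr (by omega)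
  have hAx : ∑ v ∈ A, inducedSum G f v = A.card * x := by
    have hmem : ∀ v ∈ A, inducedSum G f v = x := by
      intro v hv
      simp only [hA, Finset.mem_filter] at hv
      exact hv.2
    rw [Finset.sum_congr rfl hmem, Finset.sum_const, smul_eq_mul]
  have hBy : ∑ v ∈ B, inducedSum G f v = B.card * y := by
    have hmem : ∀ v ∈ B, inducedSum G f v = y := by
      intro v hv
      simp only [hB, Finset.mem_filter] at hv
      exact hv.2
    rw [Finset.sum_congr rfl hmem, Finset.sum_const, smul_eq_mul]
  have hApos : 0 < A.card := by
    obtain ⟨e, he⟩ := hE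
    have h1 : (A.filter (fun v => v ∈ e)).card = 1 := honeA e he
    have hsub : (A.filter (fun v => v ∈ e)).card ≤ A.card :=
      Finset.card_le_card (Finset.filter_subset _ _)
    omega
  have : A.card * x = A.card * y := by
    rw [← hAx, hsumA, ← hsumB, hBy, hAB]
  exact hxy (Nat.eq_of_mul_eq_mul_left hApos this)

end LocalAntimagic

namespace LocalAntimagic

variable {n t : ℕ} [NeZero n]

lemma adj01 (hub : 4*t+4 ≤ n) : (Gg n t).Adj 0 (cc n 0) := by
  rw [adj_iff hub]
  exact ⟨0, Nat.zero_le _, Or.inl (by ring)⟩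

lemma chiLA_Gg (hn2 : 2 ∣ n) (hub : 4*t+4 ≤ n) (hu : ∀ j ≤ t, IsUnit (cc n j)) :
    chiLA (Gg n t) = 3 := by
  have hmem : (3 : ℕ∞) ∈ {c : ℕ∞ | ∃ f : Sym2 (ZMod n) → ℕ,
      IsLocalAntimagic (Gg n t) f ∧ (colorCount (Gg n t) f : ℕ∞) = c} := by
    refine ⟨flab n t, ⟨flab_bijOn hn2 hub hu, fun u v h => sums_ne hn2 hub hu h⟩, ?_⟩
    rw [colorCount_flab hn2 hub hu]
    rfl
  apply le_antisymm (sInf_le hmem)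
  apply le_sInf
  rintro c ⟨f, ⟨hbij, hsums⟩, rfl⟩
  have hE : (Gg n t).edgeFinset.Nonempty := by
    refine ⟨s(0, cc n 0), ?_⟩
    rw [SimpleGraph.mem_edgeFinset, SimpleGraph.mem_edgeSet]
    exact adj01 hub
  have h2le : 2 ≤ colorCount (Gg n t) f := by
    apply Finset.one_lt_card.mpr
    exact ⟨_, Finset.mem_image_of_mem _ (Finset.mem_univ 0),
      _, Finset.mem_image_of_mem _ (Finset.mem_univ (cc n 0)), hsums (adj01 hub)⟩
  have hne2 : colorCount (Gg n t) f ≠ 2 :=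
    colorCount_ne_two (Gg n t) (by omega : 0 < 2*(t+1)) (regular hub) hE f hsums
  have : 3 ≤ colorCount (Gg n t) f := by omega
  exact_mod_cast this

lemma isUnit_cc {p : ℕ} (hp : p.Prime) (hn : n = 2*p) (hub : 4*t+4 ≤ n)
    {j : ℕ} (hj : j ≤ t) : IsUnit (cc n j) := by
  have hcop : Nat.Coprime (2*j+1) n := by
    rw [hn]
    apply Nat.Coprime.mul_right
    · have : (2*j+1) % 2 = 1 := by omega
      rwa [Nat.coprime_two_right, Nat.odd_iff]
    · apply Nat.Coprime.symm
      rw [Nat.Prime.coprime_iff_not_dvd hp]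
      intro hdvd
      have := Nat.le_of_dvd (by omega) hdvd
      have := hp.two_le
      omega
  exact (ZMod.isUnit_iff_coprime (2*j+1) n).mpr hcop

end LocalAntimagic


open LocalAntimagic in
/-- for every even `r ≥ 2` there are infinitely many `r`-regular
graphs of even order with `χ_la = 3` and chromatic number 2. -/
theorem stmt13 (r : ℕ) (hr : 2 ≤ r) (heven : Even r) :
    ∀ N : ℕ, ∃ (n : ℕ) (G : SimpleGraph (Fin n)) (inst : DecidableRel G.Adj),
      N < n ∧ Even n ∧ G.IsRegularOfDegree r ∧
      @chiLA (Fin n) _ _ G inst = 3 ∧ G.chromaticNumber = 2 := by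
  intro N
  obtain ⟨t, ht⟩ : ∃ t, r = 2*(t+1) := by
    obtain ⟨c, hc⟩ := heven
    exact ⟨c-1, by omega⟩
  obtain ⟨p, hpN, hp⟩ := Nat.exists_infinite_primes (max (N+1) (4*t+9))
  obtain ⟨k, hk⟩ : ∃ k, 2*p = k+1 := ⟨2*p-1, by have := hp.two_le; omega⟩
  have hple : 4*t+9 ≤ p := le_trans (le_max_right _ _) hpN
  have hNp : N+1 ≤ p := le_trans (le_max_left _ _) hpN
  have hn2 : 2 ∣ (k+1) := ⟨p, hk.symm⟩
  have hub : 4*t+4 ≤ k+1 := by omega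
  have hu : ∀ j ≤ t, IsUnit (cc (k+1) j) := fun j hj => isUnit_cc hp hk.symm hub hj
  refine ⟨k+1, Gg (k+1) t, inferInstanceAs (DecidableRel (Gg (k+1) t).Adj),
    by omega, ⟨p, by omega⟩, ?_, ?_, ?_⟩
  · have hreg := regular (n := k+1) (t := t) hub
    rw [ht]
    exact hreg
  · exact chiLA_Gg hn2 hub hu
  · exact chrom hn2 hub
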